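/- Let m_1,…,m_q ≥ 1 and N = {(a, b) ∈ ℕ^r × ℕ^q : a_1 + ⋯ + a_r = m_1 b_1 + ⋯ + m_q b_q}. Identify (a, j) ∈ V = {(a,j) : |a| = m_j} with f_{a,j} = (a, f_j) ∈ N, where f_j is the j-th standard basis vector of ℕ^q. Then for every (a, b) ∈ N there is a minimum totally ordered subset σ ⊆ V (for the order (a,j) ≤ (a',j') iff max Supp(a) ≤ min Supp(a') and j ≤ j') such that (a, b) lies in the submonoid of N generated by {f_{a,j} : (a, j) ∈ σ}. -/

import Mathlib

/-- The order on `V = {(a,j) : |a| = m_j}` used in the subdivision: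
`(a,j) ≤ (a',j')` iff `max Supp(a) ≤ min Supp(a')` and `j ≤ j'`. -/
def suppLE {r q : ℕ} (p p' : (Fin r → ℕ) × Fin q) : Prop :=
  (∀ i, p.1 i ≠ 0 → ∀ i', p'.1 i' ≠ 0 → i ≤ i') ∧ p.2 ≤ p'.2

lemma chunk_exists (r : ℕ) (a : Fin r → ℕ) (M : ℕ) (hM : M ≤ ∑ i, a i) :
    ∃ a' : Fin r → ℕ, (∀ i, a' i ≤ a i) ∧ (∑ i, a' i = M) ∧
      (∀ i i' : Fin r, a' i ≠ 0 → a i' - a' i' ≠ 0 → i ≤ i') := by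
  set g : ℕ → ℕ := fun k => if h : k < r then a ⟨k, h⟩ else 0 with hg
  set F : ℕ → ℕ := fun n => ∑ k ∈ Finset.range n, g k with hFdef
  have hF : ∀ k, F (k + 1) = F k + g k := fun k => Finset.sum_range_succ g k
  have hgi : ∀ i : Fin r, g ↑i = a i := by
    intro i; simp [hg, i.isLt]
  have hFmono : Monotone F := by
    apply monotone_nat_of_le_succ
    intro k; rw [hF]; omega
  have hFr : F r = ∑ i, a i := by
    show ∑ k ∈ Finset.range r, g k = _
    rw [← Fin.sum_univ_eq_sum_range g r]
    exact Finset.sum_congr rfl fun i _ => hgi i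
  have hF0 : F 0 = 0 := by simp [hFdef]
  refine ⟨fun i => min (F (↑i + 1)) M - min (F ↑i) M, ?_, ?_, ?_⟩
  · intro i
    dsimp only
    have := hF ↑i
    rw [hgi i] at this
    omega
  · rw [Fin.sum_univ_eq_sum_range (fun k => min (F (k + 1)) M - min (F k) M) r]
    rw [Finset.sum_range_tsub (f := fun n => min (F n) M)
      (fun x y hxy => min_le_min (hFmono hxy) le_rfl) r]
    omega
  · intro i i' h1 h2
    dsimp only at h1 h2
    by_contra hlt
    push_neg at hlt
    have hle : (↑i' : ℕ) + 1 ≤ ↑i := by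
      have := Fin.lt_def.mp hlt; omega
    have hm1 : F (↑i' + 1) ≤ F ↑i := hFmono hle
    have e1 := hF ↑i
    have e2 := hF ↑i'
    rw [hgi i'] at e2
    omega

lemma aux_cover (r q : ℕ) (m : Fin q → ℕ) (hm : ∀ j, 1 ≤ m j) :
    ∀ (n : ℕ) (b : Fin q → ℕ), ∑ j, b j = n →
    ∀ (a : Fin r → ℕ), ∑ i, a i = ∑ j, m j * b j →
    ∀ (j0 : Fin q), (∀ j, j < j0 → b j = 0) →
    ∃ σ : Set ((Fin r → ℕ) × Fin q),
      (∀ p ∈ σ, ∑ i, p.1 i = m p.2) ∧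
      (∀ p ∈ σ, ∀ p' ∈ σ, p ≠ p' → suppLE p p' ∨ suppLE p' p) ∧
      (∀ p ∈ σ, (∀ i, p.1 i ≤ a i) ∧ j0 ≤ p.2) ∧
      (a, b) ∈ AddSubmonoid.closure
        ((fun p : (Fin r → ℕ) × Fin q =>
          (p.1, (Pi.single p.2 1 : Fin q → ℕ))) '' σ) := by
  intro n
  induction n with
  | zero =>
    intro b hb a ha j0 hj0
    have hb0 : ∀ j, b j = 0 := by
      intro j
      have := Finset.sum_eq_zero_iff.mp hb
      exact this j (Finset.mem_univ j)
    have ha0 : ∀ i, a i = 0 := by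
      have : ∑ j, m j * b j = 0 := by
        apply Finset.sum_eq_zero; intro j _; rw [hb0 j]; ring
      rw [this] at ha
      intro i
      exact Finset.sum_eq_zero_iff.mp ha i (Finset.mem_univ i)
    refine ⟨∅, by simp, by simp, by simp, ?_⟩
    have : (a, b) = (0 : (Fin r → ℕ) × (Fin q → ℕ)) := by
      ext x
      · exact ha0 x
      · exact hb0 x
    rw [this]
    exact AddSubmonoid.zero_mem _
  | succ n ih =>
    intro b hb a ha j0 hj0
    -- find minimal j1 with b j1 ≠ 0
    have hbne : (Finset.univ.filter (fun j => b j ≠ 0)).Nonempty := by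
      by_contra h
      rw [Finset.not_nonempty_iff_eq_empty, Finset.filter_eq_empty_iff] at h
      have : ∑ j, b j = 0 := Finset.sum_eq_zero (by
        intro j hj
        have := h hj
        simpa using this)
      omega
    set j1 := (Finset.univ.filter (fun j => b j ≠ 0)).min' hbne with hj1def
    have hbj1 : b j1 ≠ 0 := by
      have := (Finset.univ.filter (fun j => b j ≠ 0)).min'_mem hbne
      simpa using this
    have hj1min : ∀ j, j < j1 → b j = 0 := by
      intro j hj
      by_contra hbj
      have : j1 ≤ j := Finset.min'_le _ j (by simpa using hbj)
      exact absurd hj (not_lt.mpr this)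
    have hj0j1 : j0 ≤ j1 := by
      by_contra h
      exact hbj1 (hj0 j1 (not_le.mp h))
    -- split b = b'' + single j1 1
    set b'' : Fin q → ℕ := fun j => if j = j1 then b j - 1 else b j with hb''def
    have hbsplit : b = b'' + Pi.single j1 1 := by
      funext j
      by_cases h : j = j1 <;> simp [hb''def, h, Pi.single_apply] <;> omega
    have hsum_single : ∑ j, (Pi.single j1 1 : Fin q → ℕ) j = 1 := by
      rw [Finset.sum_pi_single']
      simp
    have hb''sum : ∑ j, b'' j = n := by
      have : ∑ j, b j = ∑ j, b'' j + ∑ j, (Pi.single j1 1 : Fin q → ℕ) j := by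
        rw [← Finset.sum_add_distrib]
        exact Finset.sum_congr rfl fun j _ => by rw [hbsplit]; rfl
      omega
    have hmb : ∑ j, m j * b j = ∑ j, m j * b'' j + m j1 := by
      have h1 : ∑ j, m j * b j = ∑ j, m j * b'' j + ∑ j, m j * (Pi.single j1 1 : Fin q → ℕ) j := by
        rw [← Finset.sum_add_distrib]
        refine Finset.sum_congr rfl fun j _ => ?_
        rw [hbsplit]
        simp [mul_add]
      have h2 : ∑ j, m j * (Pi.single j1 1 : Fin q → ℕ) j = m j1 := by
        rw [Finset.sum_eq_single j1]
        · simp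
        · intro j _ hj; simp [Pi.single_apply, hj]
        · simp
      rw [h1, h2]
    -- chunk
    have hMle : m j1 ≤ ∑ i, a i := by
      rw [ha, hmb]
      omega
    obtain ⟨a', ha'le, ha'sum, ha'ord⟩ := chunk_exists r a (m j1) hMle
    set a'' : Fin r → ℕ := fun i => a i - a' i with ha''def
    have hasplit : a = a' + a'' := by
      funext i
      have := ha'le i
      simp [ha''def]
      omega
    have ha''sum : ∑ i, a'' i = ∑ j, m j * b'' j := by
      have : ∑ i, a i = ∑ i, a' i + ∑ i, a'' i := by
        rw [← Finset.sum_add_distrib]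
        exact Finset.sum_congr rfl fun i _ => by rw [hasplit]; rfl
      rw [ha, hmb] at this
      omega
    have hb''j1 : ∀ j, j < j1 → b'' j = 0 := by
      intro j hj
      simp [hb''def, (hj1min j hj), Fin.ne_of_lt hj]
    obtain ⟨σ', hσ'1, hσ'2, hσ'3, hσ'4⟩ := ih b'' hb''sum a'' ha''sum j1 hb''j1
    -- new element
    set p0 : (Fin r → ℕ) × Fin q := (a', j1) with hp0def
    have hp0le : ∀ p ∈ σ', suppLE p0 p := by
      intro p hp
      obtain ⟨hple, hpj⟩ := hσ'3 p hp
      refine ⟨?_, hpj⟩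
      intro i hi i' hi'
      have : a'' i' ≠ 0 := fun h => hi' (Nat.le_zero.mp (h ▸ hple i'))
      exact ha'ord i i' hi this
    refine ⟨insert p0 σ', ?_, ?_, ?_, ?_⟩
    · intro p hp
      rcases Set.mem_insert_iff.mp hp with h | h
      · rw [h]; exact ha'sum
      · exact hσ'1 p h
    · intro p hp p' hp' hne
      rcases Set.mem_insert_iff.mp hp with h | h <;>
        rcases Set.mem_insert_iff.mp hp' with h' | h'
      · exact absurd (h.trans h'.symm) hne
      · exact Or.inl (h ▸ hp0le p' h')
      · exact Or.inr (h' ▸ hp0le p h)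
      · exact hσ'2 p h p' h' hne
    · intro p hp
      rcases Set.mem_insert_iff.mp hp with h | h
      · rw [h]
        exact ⟨ha'le, hj0j1⟩
      · obtain ⟨hple, hpj⟩ := hσ'3 p h
        refine ⟨fun i => le_trans (hple i) ?_, le_trans hj0j1 hpj⟩
        simp [ha''def]
    · have hmem1 : ((a', (Pi.single j1 1 : Fin q → ℕ)) : (Fin r → ℕ) × (Fin q → ℕ)) ∈
          AddSubmonoid.closure ((fun p : (Fin r → ℕ) × Fin q =>
            (p.1, (Pi.single p.2 1 : Fin q → ℕ))) '' (insert p0 σ')) := by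
        apply AddSubmonoid.subset_closure
        exact ⟨p0, Set.mem_insert _ _, rfl⟩
      have hmem2 : ((a'', b'') : (Fin r → ℕ) × (Fin q → ℕ)) ∈
          AddSubmonoid.closure ((fun p : (Fin r → ℕ) × Fin q =>
            (p.1, (Pi.single p.2 1 : Fin q → ℕ))) '' (insert p0 σ')) := by
        refine AddSubmonoid.closure_mono (Set.image_mono (Set.subset_insert _ _)) hσ'4
      have : (a, b) = ((a', (Pi.single j1 1 : Fin q → ℕ)) : (Fin r → ℕ) × (Fin q → ℕ)) + (a'', b'') := by
        rw [Prod.mk_add_mk]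
        exact Prod.ext hasplit (by rw [hbsplit]; exact (add_comm _ _))
      rw [this]
      exact AddSubmonoid.add_mem _ hmem1 hmem2


/-- for `N = {(a,b) ∈ ℕ^r × ℕ^q : ∑ aᵢ = ∑ m_j b_j}` (all `m_j ≥ 1`),
every `(a,b) ∈ N` lies in the submonoid generated by `{(a',f_j) : (a',j) ∈ σ}` for
some totally ordered subset `σ ⊆ V = {(a',j) : ∑ a'ᵢ = m_j}`: the cones `N_σ`
cover `N`. -/
theorem totally_ordered_subdivision_covers
    (r q : ℕ) (hr : 1 ≤ r) (hq : 1 ≤ q) (m : Fin q → ℕ) (hm : ∀ j, 1 ≤ m j)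
    (a : Fin r → ℕ) (b : Fin q → ℕ) (hab : ∑ i, a i = ∑ j, m j * b j) :
    ∃ σ : Set ((Fin r → ℕ) × Fin q),
      (∀ p ∈ σ, ∑ i, p.1 i = m p.2) ∧
      (∀ p ∈ σ, ∀ p' ∈ σ, p ≠ p' → suppLE p p' ∨ suppLE p' p) ∧
      (a, b) ∈ AddSubmonoid.closure
        ((fun p : (Fin r → ℕ) × Fin q =>
          (p.1, (Pi.single p.2 1 : Fin q → ℕ))) '' σ) := by
  obtain ⟨σ, h1, h2, _, h4⟩ := aux_cover r q m hm (∑ j, b j) b rfl a hab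
    ⟨0, hq⟩ (fun j hj => absurd hj (by simp [Fin.lt_def]))
  exact ⟨σ, h1, h2, h4⟩
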